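/- Let (ρ_k)_{k≥1} be i.i.d. strictly positive random variables with lim_{t→∞} log ℙ(ρ_1 > t)/log t = −α for some α > 0. Then for every ε > 0, ℙ-almost surely there exists n_0 such that for all n ≥ n_0 the number of indices 1 ≤ k ≤ n with ρ_k > n^{1/α − ε} is at least 2/ε. -/

import Mathlib

open MeasureTheory Filter ProbabilityTheory

lemma mdt_count_bound {Ω : Type*} [MeasurableSpace Ω] (P : Measure Ω) [IsProbabilityMeasure P]
    (ρ : ℕ → Ω → ℝ)
    (hindep : iIndepFun ρ P)
    (hident : ∀ k, IdentDistrib (ρ k) (ρ 1) P P)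
    (c : ℝ) (N n : ℕ) :
    P {ω | (((Finset.Icc 1 n).filter (fun k => ρ k ω > c)).card) < N}
      ≤ (n.choose (n - (N-1))) * (P {ω | ρ 1 ω ≤ c}) ^ (n - (N-1)) := by
  set m := n - (N - 1) with hm
  have hsub : {ω | (((Finset.Icc 1 n).filter (fun k => ρ k ω > c)).card) < N}
      ⊆ ⋃ S ∈ (Finset.Icc 1 n).powersetCard m, ⋂ k ∈ S, {ω | ρ k ω ≤ c} := by
    intro ω hω
    have hcards := Finset.card_filter_add_card_filter_not
      (s := Finset.Icc 1 n) (p := fun k => ρ k ω > c)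
    have hIcc : (Finset.Icc 1 n).card = n := by simp
    have hsucc : ((Finset.Icc 1 n).filter (fun k => ρ k ω > c)).card ≤ N - 1 :=
      Nat.le_sub_one_of_lt hω
    have hF : m ≤ ((Finset.Icc 1 n).filter (fun k => ¬ ρ k ω > c)).card := by omega
    obtain ⟨S, hS, hScard⟩ := Finset.exists_subset_card_eq hF
    refine Set.mem_iUnion₂.2 ⟨S, ?_, ?_⟩
    · exact Finset.mem_powersetCard.2 ⟨hS.trans (Finset.filter_subset _ _), hScard⟩
    · refine Set.mem_iInter₂.2 fun k hk => ?_
      have := hS hk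
      rw [Finset.mem_filter] at this
      exact not_lt.1 this.2
  calc P {ω | (((Finset.Icc 1 n).filter (fun k => ρ k ω > c)).card) < N}
      ≤ P (⋃ S ∈ (Finset.Icc 1 n).powersetCard m, ⋂ k ∈ S, {ω | ρ k ω ≤ c}) :=
        measure_mono hsub
    _ ≤ ∑ S ∈ (Finset.Icc 1 n).powersetCard m, P (⋂ k ∈ S, {ω | ρ k ω ≤ c}) :=
        measure_biUnion_finset_le _ _
    _ = ∑ S ∈ (Finset.Icc 1 n).powersetCard m, (P {ω | ρ 1 ω ≤ c}) ^ m := by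
        refine Finset.sum_congr rfl fun S hS => ?_
        have hprod : P (⋂ k ∈ S, {ω | ρ k ω ≤ c}) = ∏ k ∈ S, P {ω | ρ k ω ≤ c} :=
          hindep.meas_biInter (fun k _ => ⟨Set.Iic c, measurableSet_Iic, rfl⟩)
        rw [hprod]
        have heach : ∀ k ∈ S, P {ω | ρ k ω ≤ c} = P {ω | ρ 1 ω ≤ c} := fun k _ =>
          (hident k).measure_mem_eq (measurableSet_Iic (a := c))
        rw [Finset.prod_congr rfl heach, Finset.prod_const,
          (Finset.mem_powersetCard.1 hS).2]
    _ = (n.choose m) * (P {ω | ρ 1 ω ≤ c}) ^ m := by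
        rw [Finset.sum_const, Finset.card_powersetCard, nsmul_eq_mul]
        simp

theorem many_deep_traps
    {Ω : Type*} [MeasurableSpace Ω] (P : Measure Ω) [IsProbabilityMeasure P]
    (ρ : ℕ → Ω → ℝ) (hmeas : ∀ k, Measurable (ρ k))
    (hpos : ∀ k ω, 0 < ρ k ω)
    (hindep : iIndepFun ρ P)
    (hident : ∀ k, IdentDistrib (ρ k) (ρ 1) P P)
    (α : ℝ) (hα : 0 < α)
    (htail : Tendsto (fun t : ℝ => Real.log (P {ω | ρ 1 ω > t}).toReal / Real.log t)
      atTop (nhds (-α)))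
    (ε : ℝ) (hε : 0 < ε) :
    ∀ᵐ ω ∂P, ∃ n₀ : ℕ, ∀ n ≥ n₀,
      (2 / ε : ℝ) ≤
        (((Finset.Icc 1 n).filter (fun k => ρ k ω > (n : ℝ) ^ (1 / α - ε))).card : ℝ) := by
  set β : ℝ := 1 / α - ε with hβdef
  set δ : ℝ := min (α * ε) 1 / 2 with hδdef
  have hmin : 0 < min (α * ε) 1 := lt_min (mul_pos hα hε) one_pos
  have hδpos : 0 < δ := by rw [hδdef]; linarith
  have hδle : δ ≤ 1/2 := by
    have : min (α * ε) 1 ≤ 1 := min_le_right _ _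
    rw [hδdef]; linarith
  have hδαε : δ < α * ε := by
    have h1 : min (α * ε) 1 ≤ α * ε := min_le_left _ _
    have h2 : 0 < min (α * ε) 1 := lt_min (mul_pos hα hε) one_pos
    rw [hδdef]; linarith
  set N : ℕ := ⌈2 / ε⌉₊ with hNdef
  have hN2ε : 2 / ε ≤ (N : ℝ) := Nat.le_ceil _
  have hN1 : 1 ≤ N := Nat.one_le_ceil_iff.2 (by positivity)
  set p : ℕ → ℝ := fun n => (P {ω | ρ 1 ω > (n : ℝ) ^ β}).toReal with hpdef
  -- eventual positivity of the tail in t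
  have ht_pos : ∀ᶠ t : ℝ in atTop, 0 < (P {ω | ρ 1 ω > t}).toReal := by
    filter_upwards [htail.eventually (eventually_lt_nhds
      (show -α < -α/2 by linarith)), eventually_ge_atTop (2:ℝ)] with t h1 h2
    by_contra h
    push_neg at h
    have h0 : (P {ω | ρ 1 ω > t}).toReal = 0 := le_antisymm h ENNReal.toReal_nonneg
    rw [h0, Real.log_zero, zero_div] at h1
    linarith
  -- key tail lower bound along integers
  have hp_ev : ∀ᶠ n : ℕ in atTop, (n:ℝ) ^ (δ - 1) ≤ p n := by
    by_cases hβpos : 0 < β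
    · have hnβ : Tendsto (fun n : ℕ => ((n:ℝ)) ^ β) atTop atTop :=
        (tendsto_rpow_atTop hβpos).comp tendsto_natCast_atTop_atTop
      have hratio : Tendsto (fun n : ℕ =>
          Real.log (p n) / Real.log ((n:ℝ) ^ β)) atTop (nhds (-α)) := htail.comp hnβ
      have h2 : Tendsto (fun n : ℕ => Real.log (p n) / Real.log (n:ℝ)) atTop
          (nhds (β * -α)) := by
        refine Tendsto.congr' ?_ (hratio.const_mul β)
        filter_upwards [eventually_ge_atTop 2] with n hn
        have hn1 : (1:ℝ) < (n:ℝ) := by exact_mod_cast Nat.lt_of_lt_of_le one_lt_two hn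
        have hn0 : (0:ℝ) < (n:ℝ) := by linarith
        have hlog : Real.log (n:ℝ) ≠ 0 := (Real.log_pos hn1).ne'
        rw [Real.log_rpow hn0]
        field_simp [hβpos.ne']
      have hlim : β * -α = α * ε - 1 := by
        rw [hβdef]; field_simp; ring
      rw [hlim] at h2
      have hev1 : ∀ᶠ n : ℕ in atTop, δ - 1 < Real.log (p n) / Real.log (n:ℝ) :=
        h2.eventually (eventually_gt_nhds (by linarith))
      have hevpos : ∀ᶠ n : ℕ in atTop, 0 < p n := hnβ.eventually ht_pos
      filter_upwards [hev1, hevpos, eventually_ge_atTop 2] with n h1 hpn hn2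
      have hn1 : (1:ℝ) < (n:ℝ) := by exact_mod_cast Nat.lt_of_lt_of_le one_lt_two hn2
      have hlog : 0 < Real.log (n:ℝ) := Real.log_pos hn1
      have hkey : (δ - 1) * Real.log (n:ℝ) < Real.log (p n) := (lt_div_iff₀ hlog).1 h1
      calc (n:ℝ) ^ (δ - 1) = Real.exp (Real.log (n:ℝ) * (δ - 1)) :=
            Real.rpow_def_of_pos (by linarith) _
        _ ≤ Real.exp (Real.log (p n)) := by
            apply Real.exp_le_exp.2; rw [mul_comm]; linarith
        _ = p n := Real.exp_log hpn
    · obtain ⟨T, hT2, hTpos⟩ : ∃ T : ℝ, 2 ≤ T ∧ 0 < (P {ω | ρ 1 ω > T}).toReal :=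
        ((eventually_ge_atTop (2:ℝ)).and ht_pos).exists
      have hmono : ∀ n : ℕ, 1 ≤ n → (P {ω | ρ 1 ω > T}).toReal ≤ p n := by
        intro n hn
        have hn1 : (1:ℝ) ≤ (n:ℝ) := by exact_mod_cast hn
        have hle : (n:ℝ) ^ β ≤ T := by
          have h0 : (n:ℝ) ^ β ≤ (n:ℝ) ^ (0:ℝ) :=
            Real.rpow_le_rpow_of_exponent_le hn1 (not_lt.1 hβpos)
          rw [Real.rpow_zero] at h0
          linarith
        exact ENNReal.toReal_mono (measure_ne_top _ _)
          (measure_mono fun ω hω => lt_of_le_of_lt hle hω)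
      have hto0 : Tendsto (fun n : ℕ => (n:ℝ) ^ (δ - 1)) atTop (nhds 0) := by
        have : Tendsto (fun x : ℝ => x ^ (-(1 - δ))) atTop (nhds 0) :=
          tendsto_rpow_neg_atTop (by linarith)
        have := this.comp tendsto_natCast_atTop_atTop
        simpa [neg_sub, Function.comp_def] using this
      filter_upwards [hto0.eventually (eventually_le_nhds hTpos),
        eventually_ge_atTop 1] with n h1 h2
      exact h1.trans (hmono n h2)
  -- growth bound
  have hg : ∀ᶠ n : ℕ in atTop,
      (n:ℝ) ^ (N:ℕ) * Real.exp (-(1/2) * (n:ℝ) ^ δ) ≤ ((n:ℝ)^2)⁻¹ := by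
    have hcomp : Tendsto (fun n : ℕ =>
        ((n:ℝ) ^ δ) ^ (((N:ℝ)+2)/δ) * Real.exp (-(1/2) * (n:ℝ) ^ δ)) atTop (nhds 0) :=
      (tendsto_rpow_mul_exp_neg_mul_atTop_nhds_zero (((N:ℝ)+2)/δ) (1/2)
        (by norm_num)).comp ((tendsto_rpow_atTop hδpos).comp tendsto_natCast_atTop_atTop)
    have hten : Tendsto (fun n : ℕ =>
        (n:ℝ) ^ ((N:ℝ)+2) * Real.exp (-(1/2) * (n:ℝ) ^ δ)) atTop (nhds 0) := by
      refine Tendsto.congr' ?_ hcomp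
      filter_upwards with n
      have hexp : ((n:ℝ) ^ δ) ^ (((N:ℝ)+2)/δ) = (n:ℝ) ^ ((N:ℝ)+2) := by
        rw [← Real.rpow_mul (Nat.cast_nonneg n)]
        congr 1
        field_simp
      rw [hexp]
    have hev1 := hten.eventually (eventually_le_nhds (show (0:ℝ) < 1 by norm_num))
    filter_upwards [hev1, eventually_ge_atTop 1] with n h1 hn
    have hn1 : (1:ℝ) ≤ (n:ℝ) := by exact_mod_cast hn
    have hn0 : (0:ℝ) < (n:ℝ) := by linarith
    rw [inv_eq_one_div, le_div_iff₀ (by positivity)]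
    calc (n:ℝ)^(N:ℕ) * Real.exp (-(1/2)*(n:ℝ)^δ) * (n:ℝ)^2
        = (n:ℝ)^((N:ℝ)+2) * Real.exp (-(1/2)*(n:ℝ)^δ) := by
          rw [show ((N:ℝ)+2) = ((N:ℕ):ℝ) + ((2:ℕ):ℝ) by norm_num,
            Real.rpow_add hn0, Real.rpow_natCast, Real.rpow_natCast]
          ring
      _ ≤ 1 := h1
  obtain ⟨n₁, hn₁⟩ := eventually_atTop.1 (hp_ev.and hg)
  set n₂ : ℕ := max n₁ (2*N+2) with hn₂def
  set A : ℕ → Set Ω := fun n =>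
    {ω | (((Finset.Icc 1 n).filter (fun k => ρ k ω > (n : ℝ) ^ β)).card) < N} with hAdef
  set c : ℕ → ℝ := fun n => if n < n₂ then 1 else ((n:ℝ)^2)⁻¹ with hcdef
  have hcnonneg : ∀ n, 0 ≤ c n := by
    intro n; rw [hcdef]; dsimp only; split <;> positivity
  have hsum0 : Summable (fun n : ℕ => ((n:ℝ)^2)⁻¹) := by
    simpa [one_div] using summable_one_div_nat_pow.2 (show 1 < 2 by norm_num)
  have hsumc : Summable c := by
    refine (summable_nat_add_iff n₂).1 ?_
    refine ((summable_nat_add_iff n₂).2 hsum0).congr fun n => ?_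
    rw [hcdef]; dsimp only
    rw [if_neg (by omega)]
  have key : ∀ n, P (A n) ≤ ENNReal.ofReal (c n) := by
    intro n
    by_cases h : n < n₂
    · rw [hcdef]; dsimp only; rw [if_pos h, ENNReal.ofReal_one]
      exact prob_le_one
    · push_neg at h
      have hn1 : n₁ ≤ n := le_trans (le_max_left _ _) h
      have hNn : 2*N + 2 ≤ n := le_trans (le_max_right _ _) h
      obtain ⟨hp, hgn⟩ := hn₁ n hn1
      set m := n - (N - 1) with hm
      have hN1n : N - 1 ≤ n := by omega
      have hn0 : (0:ℝ) < (n:ℝ) := by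
        have : 0 < n := by omega
        exact_mod_cast this
      have hn1' : (1:ℝ) ≤ (n:ℝ) := by
        have : 1 ≤ n := by omega
        exact_mod_cast this
      -- 1 - p n facts
      have hqt : (P {ω | ρ 1 ω ≤ (n:ℝ) ^ β}).toReal = 1 - p n := by
        have hcompl : {ω | ρ 1 ω ≤ (n:ℝ) ^ β} = {ω | ρ 1 ω > (n:ℝ) ^ β}ᶜ := by
          ext ω; simp [not_lt]
        have hms : MeasurableSet {ω | ρ 1 ω > (n:ℝ) ^ β} :=
          (hmeas 1) measurableSet_Ioi
        rw [hcompl, measure_compl hms (measure_ne_top _ _), measure_univ,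
          ENNReal.toReal_sub_of_le prob_le_one ENNReal.one_ne_top, ENNReal.toReal_one]
      have hp0 : 0 ≤ p n := ENNReal.toReal_nonneg
      have hp1 : p n ≤ 1 := by
        have := ENNReal.toReal_mono ENNReal.one_ne_top
          (prob_le_one (μ := P) (s := {ω | ρ 1 ω > (n:ℝ) ^ β}))
        simpa using this
      -- the counting bound
      have hchoose := mdt_count_bound P ρ hindep hident ((n:ℝ) ^ β) N n
      have hconv : ((n.choose m : ℕ) : ENNReal) * (P {ω | ρ 1 ω ≤ (n:ℝ) ^ β}) ^ m
          = ENNReal.ofReal ((n.choose m : ℝ) * (1 - p n) ^ m) := by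
        rw [ENNReal.ofReal_mul (by positivity), ENNReal.ofReal_natCast,
          ← hqt, ENNReal.ofReal_pow ENNReal.toReal_nonneg,
          ENNReal.ofReal_toReal (measure_ne_top _ _)]
      -- real estimates
      have hmcast : ((m:ℕ):ℝ) = (n:ℝ) - ((N:ℝ) - 1) := by
        rw [hm]
        push_cast [Nat.cast_sub hN1n, Nat.cast_sub hN1]
        ring
      have hNcast : ((2*N+2:ℕ):ℝ) ≤ (n:ℝ) := by exact_mod_cast hNn
      have hNr : (2:ℝ) * N + 2 ≤ (n:ℝ) := by push_cast at hNcast; linarith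
      have hm2 : (n:ℝ)/2 ≤ (m:ℝ) := by rw [hmcast]; linarith
      have h1 : (n.choose m : ℝ) ≤ (n:ℝ) ^ (N:ℕ) := by
        have hsymm : n.choose m = n.choose (N-1) := by
          rw [hm]; exact Nat.choose_symm hN1n
        calc (n.choose m : ℝ) = (n.choose (N-1) : ℝ) := by rw [hsymm]
          _ ≤ ((n ^ (N-1) : ℕ) : ℝ) := by exact_mod_cast Nat.choose_le_pow n (N-1)
          _ = (n:ℝ) ^ (N-1 : ℕ) := by push_cast; ring
          _ ≤ (n:ℝ) ^ (N:ℕ) := pow_le_pow_right₀ hn1' (by omega)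
      have h2 : (1 - p n) ^ m ≤ Real.exp (-(1/2) * (n:ℝ) ^ δ) := by
        have e1 : 1 - p n ≤ Real.exp (-(p n)) := by
          have := Real.add_one_le_exp (-(p n)); linarith
        have e2 : (1 - p n) ^ m ≤ Real.exp (-(p n)) ^ m :=
          pow_le_pow_left₀ (by linarith) e1 m
        have e4 : (1/2) * (n:ℝ) ^ δ ≤ p n * m := by
          have hmul : (n:ℝ) ^ (δ - 1) * ((n:ℝ)/2) ≤ p n * (m:ℝ) :=
            mul_le_mul hp hm2 (by positivity) hp0
          have hrw : (n:ℝ) ^ (δ - 1) * ((n:ℝ)/2) = (1/2) * (n:ℝ) ^ δ := by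
            rw [show δ = (δ - 1) + 1 by ring, Real.rpow_add hn0, Real.rpow_one]
            ring_nf
          linarith [hrw ▸ hmul]
        calc (1 - p n) ^ m ≤ Real.exp (-(p n)) ^ m := e2
          _ = Real.exp ((m:ℝ) * -(p n)) := (Real.exp_nat_mul _ m).symm
          _ ≤ Real.exp (-(1/2) * (n:ℝ) ^ δ) := by
              apply Real.exp_le_exp.2; nlinarith [e4]
      have hreal : (n.choose m : ℝ) * (1 - p n) ^ m ≤ c n := by
        rw [hcdef]; dsimp only; rw [if_neg (by omega)]
        calc (n.choose m : ℝ) * (1 - p n) ^ m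
            ≤ (n:ℝ) ^ (N:ℕ) * Real.exp (-(1/2) * (n:ℝ) ^ δ) :=
              mul_le_mul h1 h2 (pow_nonneg (by linarith) m) (by positivity)
          _ ≤ ((n:ℝ)^2)⁻¹ := hgn
      calc P (A n) ≤ ((n.choose m : ℕ) : ENNReal) * (P {ω | ρ 1 ω ≤ (n:ℝ) ^ β}) ^ m :=
            hchoose
        _ = ENNReal.ofReal ((n.choose m : ℝ) * (1 - p n) ^ m) := hconv
        _ ≤ ENNReal.ofReal (c n) := ENNReal.ofReal_le_ofReal hreal
  have htsum : (∑' n, P (A n)) ≠ ⊤ := by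
    refine ne_top_of_le_ne_top ?_ (ENNReal.tsum_le_tsum key)
    rw [← ENNReal.ofReal_tsum_of_nonneg hcnonneg hsumc]
    exact ENNReal.ofReal_ne_top
  filter_upwards [MeasureTheory.ae_eventually_notMem htsum] with ω hω
  obtain ⟨n₀, hn₀⟩ := eventually_atTop.1 hω
  refine ⟨n₀, fun n hn => ?_⟩
  have hnot := hn₀ n hn
  rw [hAdef] at hnot
  simp only [Set.mem_setOf_eq, not_lt] at hnot
  calc (2/ε : ℝ) ≤ (N : ℝ) := hN2ε
    _ ≤ _ := by exact_mod_cast hnot
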